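/- Let p be a probability vector on C classes vanishing on a nonempty set C_f, and q a strictly positive probability vector on C classes. Then KL(p‖q) ≥ −log(1 − Σ_{c ∈ C_f} q_c), i.e., the KL divergence from the masked teacher distribution to the student is lower-bounded by −log of the student's total retained mass. -/

import Mathlib

open Finset

noncomputable def klDiv {C : ℕ} (p q : Fin C → ℝ) : ℝ :=
  ∑ c, if p c = 0 then 0 else p c * Real.log (p c / q c)

/-- For p a probability vector vanishing on a nonempty set C_f and q a strictly
positive probability vector, KL(p‖q) ≥ −log(1 − Σ_{c ∈ C_f} q_c). -/
theorem klDiv_lower_bound_retained_mass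
    {C : ℕ} (Cf : Finset (Fin C)) (hCf : Cf.Nonempty) (hCf' : Cf ⊂ Finset.univ)
    (p q : Fin C → ℝ)
    (hp0 : ∀ c, 0 ≤ p c) (hp1 : ∑ c, p c = 1)
    (hpCf : ∀ c ∈ Cf, p c = 0)
    (hq0 : ∀ c, 0 < q c) (hq1 : ∑ c, q c = 1) :
    -Real.log (1 - ∑ c ∈ Cf, q c) ≤ klDiv p q := by
  set s : ℝ := ∑ c ∈ Cfᶜ, q c with hs
  have hsum : ∑ c ∈ Cf, q c + s = 1 := by
    rw [hs, Finset.sum_add_sum_compl, hq1]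
  have h1s : 1 - ∑ c ∈ Cf, q c = s := by linarith
  rw [h1s]
  have hs0 : 0 < s := by
    obtain ⟨c, hc⟩ := Finset.exists_of_ssubset hCf'
    exact Finset.sum_pos' (fun i _ => (hq0 i).le)
      ⟨c, Finset.mem_compl.2 hc.2, hq0 c⟩
  set T : Finset (Fin C) := Finset.univ.filter (fun c => p c ≠ 0) with hT
  have hTmem : ∀ c, c ∈ T ↔ p c ≠ 0 := by
    intro c; simp [hT]
  have hTpos : ∀ c ∈ T, 0 < p c := fun c hc =>
    lt_of_le_of_ne (hp0 c) (Ne.symm ((hTmem c).1 hc))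
  have hpT : ∑ c ∈ T, p c = 1 := by
    rw [← hp1]
    exact Finset.sum_filter_of_ne (fun c _ h => by simpa using h)
  have hkl : klDiv p q = ∑ c ∈ T, p c * Real.log (p c / q c) := by
    rw [klDiv, hT, Finset.sum_filter]
    exact Finset.sum_congr rfl fun c _ => by by_cases h : p c = 0 <;> simp [h]
  -- Jensen: ∑ p log(q/(p s)) ≤ log(∑ q/s) ≤ 0
  have hjensen := (strictConcaveOn_log_Ioi.concaveOn).le_map_sum
    (t := T) (w := fun c => p c) (p := fun c => q c / (p c * s))
    (fun c hc => (hTpos c hc).le) hpT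
    (fun c hc => Set.mem_Ioi.2 (div_pos (hq0 c) (mul_pos (hTpos c hc) hs0)))
  have hx : ∑ c ∈ T, p c • (q c / (p c * s)) = (∑ c ∈ T, q c) / s := by
    rw [Finset.sum_div]
    refine Finset.sum_congr rfl (fun c hc => ?_)
    have := (hTpos c hc).ne'
    field_simp
    rw [smul_eq_mul, mul_div_assoc', mul_div_assoc', div_eq_iff (mul_ne_zero this hs0.ne')]
    ring
  have hTq : ∑ c ∈ T, q c ≤ s := by
    apply Finset.sum_le_sum_of_subset_of_nonneg
    · intro c hc
      refine Finset.mem_compl.2 (fun hcf => ?_)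
      exact (hTmem c).1 hc (hpCf c hcf)
    · intro c _ _; exact (hq0 c).le
  have hlog1 : Real.log ((∑ c ∈ T, q c) / s) ≤ 0 := by
    apply Real.log_nonpos
    · exact div_nonneg (Finset.sum_nonneg fun c _ => (hq0 c).le) hs0.le
    · rw [div_le_one hs0]; exact hTq
  have hsplit : ∀ c ∈ T, p c • Real.log (q c / (p c * s))
      = -(p c * Real.log (p c / q c)) - p c * Real.log s := by
    intro c hc
    have hp' := (hTpos c hc).ne'
    have hq' := (hq0 c).ne'
    rw [smul_eq_mul, div_mul_eq_div_div, Real.log_div (by positivity) hs0.ne',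
      Real.log_div hq' hp', Real.log_div hp' hq']
    ring
  calc -Real.log s = ∑ c ∈ T, (-(p c * Real.log (p c / q c)) - p c * Real.log s)
        + klDiv p q := by
        rw [Finset.sum_sub_distrib, ← Finset.sum_mul, hpT, hkl, Finset.sum_neg_distrib]
        ring
    _ ≤ 0 + klDiv p q := by
        apply add_le_add_left
        calc ∑ c ∈ T, (-(p c * Real.log (p c / q c)) - p c * Real.log s)
            = ∑ c ∈ T, p c • Real.log (q c / (p c * s)) :=
              (Finset.sum_congr rfl hsplit).symm
          _ ≤ Real.log (∑ c ∈ T, p c • (q c / (p c * s))) := hjensen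
          _ = Real.log ((∑ c ∈ T, q c) / s) := by rw [hx]
          _ ≤ 0 := hlog1
    _ = klDiv p q := by ring
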